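/- Let σ* be a proper face of Δ* (in the nef-partition setting), with σ_i* = {n ∈ σ* | φ_i(n) = 1} and σ̌ = σ₁* + ⋯ + σ_r* nonempty. Then σ* = Conv(σ₁*, …, σ_r*); that is, every point of σ* lies in the convex hull of the subsets σ_i*. -/

import Mathlib

open scoped Pointwise

namespace BB

abbrev V (n : ℕ) : Type := Fin n → ℝ

/-- The standard pairing between `M_ℝ` and `N_ℝ` (both identified with `ℝⁿ`). -/
def pair {n : ℕ} (m v : V n) : ℝ := ∑ i, m i * v i

/-- A point of `ℝⁿ` is a lattice point if all its coordinates are integers. -/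
def IsLatticePt {n : ℕ} (m : V n) : Prop := ∀ i, ∃ z : ℤ, m i = (z : ℝ)

/-- A lattice polytope: convex hull of finitely many lattice points. -/
def IsLatticePolytope {n : ℕ} (P : Set (V n)) : Prop :=
  ∃ S : Finset (V n), (∀ m ∈ S, IsLatticePt m) ∧ P = convexHull ℝ (S : Set (V n))

/-- The polar dual `P* = {v | ⟨m,v⟩ ≥ -1 for all m ∈ P}`. -/
def polar {n : ℕ} (P : Set (V n)) : Set (V n) := {v | ∀ m ∈ P, -1 ≤ pair m v}

/-- A reflexive polytope: a lattice polytope with `0` in its interior whose polar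
dual is again a lattice polytope. -/
def IsReflexive {n : ℕ} (P : Set (V n)) : Prop :=
  IsLatticePolytope P ∧ (0 : V n) ∈ interior P ∧ IsLatticePolytope (polar P)

/-- The support function `supp P v = -inf{⟨m,v⟩ | m ∈ P}`; for `P = Δᵢ` and `v ∈ N_ℝ`
this is the piecewise linear function `φᵢ(v)` of the nef-partition. -/
noncomputable def supp {n : ℕ} (P : Set (V n)) (v : V n) : ℝ :=
  sSup ((fun m => -(pair m v)) '' P)

end BB


namespace BB

/-- `F` is a face of the convex set `P` (an exposed subset). -/
def IsFaceOf {n : ℕ} (F P : Set (V n)) : Prop := IsExposed ℝ P F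

private lemma pair_add' {n : ℕ} (a b v : V n) : pair (a + b) v = pair a v + pair b v := by
  simp [pair, add_mul, Finset.sum_add_distrib]

private lemma pair_zero' {n : ℕ} (v : V n) : pair 0 v = 0 := by simp [pair]

private lemma pair_sum' {n : ℕ} {ι : Type*} (s : Finset ι) (g : ι → V n) (v : V n) :
    pair (∑ i ∈ s, g i) v = ∑ i ∈ s, pair (g i) v := by
  induction s using Finset.cons_induction with
  | empty => simp [pair]
  | cons a s ha ih => rw [Finset.sum_cons, Finset.sum_cons, pair_add', ih]

private lemma pair_smul_right {n : ℕ} (m : V n) (c : ℝ) (v : V n) :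
    pair m (c • v) = c * pair m v := by
  simp only [pair, Finset.mul_sum, Pi.smul_apply, smul_eq_mul]
  exact Finset.sum_congr rfl fun i _ => by ring

private lemma pair_cont {n : ℕ} (v : V n) : Continuous fun m : V n => pair m v := by
  unfold pair
  exact continuous_finset_sum _ fun i _ => (continuous_apply i).mul continuous_const

private lemma le_supp' {n : ℕ} {P : Set (V n)} (hP : IsCompact P) {m : V n} (hm : m ∈ P)
    (v : V n) : -(pair m v) ≤ supp P v :=
  le_csSup ((hP.image (pair_cont v).neg).bddAbove) ⟨m, hm, rfl⟩

theorem stmt2 {n r : ℕ} (Δ : Set (V n)) (D : Fin r → Set (V n))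
    (hΔrefl : IsReflexive Δ)
    (hDlat : ∀ i, IsLatticePolytope (D i))
    (hΔ : Δ = ∑ i, D i)
    (E : Finset (V n))
    (hE : (E : Set (V n)) = Set.extremePoints ℝ (polar Δ))
    (hnef : ∀ i, ∀ e ∈ E, supp (D i) e = 0 ∨ supp (D i) e = 1)
    (Nb : Fin r → Set (V n))
    (hNb : ∀ i, Nb i = convexHull ℝ ({0} ∪ {e : V n | e ∈ E ∧ supp (D i) e = 1}))
    -- a proper face σ* of Δ*
    (σs : Set (V n))
    (hface : IsFaceOf σs (polar Δ))
    (hproper : σs ≠ polar Δ)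
    -- σ̌ = σ₁* + ⋯ + σ_r* is nonempty
    (hchk : (∑ i, {v ∈ σs | supp (D i) v = 1}).Nonempty) :
    σs = convexHull ℝ (⋃ i, {v ∈ σs | supp (D i) v = 1}) := by
  have hσsub : σs ⊆ polar Δ := hface.subset
  -- dispatch the degenerate case n = 0
  rcases Nat.eq_zero_or_pos n with hn | hn
  · subst hn
    haveI : Unique (V 0) := Pi.uniqueOfIsEmpty _
    have hσempty : σs = ∅ := by
      by_contra h
      obtain ⟨x, hx⟩ := Set.nonempty_iff_ne_empty.2 h
      refine hproper (Set.Subset.antisymm hσsub fun y hy => ?_)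
      rwa [Subsingleton.elim y x]
    have hU : (⋃ i, {v ∈ σs | supp (D i) v = 1}) = ∅ := by
      rw [hσempty]; simp
    rw [hU, convexHull_empty]; exact hσempty
  -- the general case
  obtain ⟨⟨S, _, hSΔ⟩, h0int, ⟨S', _, hS'⟩⟩ := hΔrefl
  have hΔcomp : IsCompact Δ := hSΔ ▸ S.finite_toSet.isCompact_convexHull ℝ
  have hpolarconv : Convex ℝ (polar Δ) := hS' ▸ convex_convexHull ℝ _
  have hpolarcomp : IsCompact (polar Δ) := hS' ▸ S'.finite_toSet.isCompact_convexHull ℝ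
  have hσconv : Convex ℝ σs := hface.convex hpolarconv
  have hσcomp : IsCompact σs :=
    hpolarcomp.of_isClosed_subset (hface.isClosed hpolarcomp.isClosed) hσsub
  have hDcomp : ∀ i, IsCompact (D i) := fun i => by
    obtain ⟨T, _, hT⟩ := hDlat i
    exact hT ▸ T.finite_toSet.isCompact_convexHull ℝ
  -- 0 ∈ polar Δ
  have h0polar : (0 : V n) ∈ polar Δ := by
    intro m hm
    have : pair m (0 : V n) = 0 := by simp [pair]
    rw [this]; norm_num
  -- a bound for Δ, giving a small nonzero vector in polar Δ
  obtain ⟨R₀, hR₀⟩ := hΔcomp.isBounded.subset_closedBall 0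
  set R : ℝ := max R₀ 1 with hRdef
  have hRpos : (0 : ℝ) < R := lt_of_lt_of_le one_pos (le_max_right _ _)
  have hmR : ∀ m ∈ Δ, ∀ i, |m i| ≤ R := by
    intro m hm i
    have h1 : ‖m‖ ≤ R₀ := by
      have := hR₀ hm
      rwa [Metric.mem_closedBall, dist_zero_right] at this
    calc |m i| = ‖m i‖ := (Real.norm_eq_abs _).symm
      _ ≤ ‖m‖ := norm_le_pi_norm m i
      _ ≤ R₀ := h1
      _ ≤ R := le_max_left _ _
  set c : ℝ := 1 / (n * R) with hcdef
  have hnR : (0 : ℝ) < n * R := mul_pos (by exact_mod_cast hn) hRpos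
  have hcpos : 0 < c := by positivity
  set w : V n := fun _ => c with hwdef
  have hwne : w ≠ 0 := by
    intro h
    have := congrFun h ⟨0, hn⟩
    simp only [hwdef, Pi.zero_apply] at this
    exact hcpos.ne' this
  have hpairw : ∀ m ∈ Δ, |pair m w| ≤ 1 := by
    intro m hm
    have h1 : |pair m w| ≤ ∑ i, |m i * w i| := Finset.abs_sum_le_sum_abs _ _
    have h2 : ∀ i ∈ Finset.univ, |m i * w i| ≤ R * c := by
      intro i _
      rw [abs_mul]
      have : |w i| = c := abs_of_pos hcpos
      rw [this]
      exact mul_le_mul_of_nonneg_right (hmR m hm i) hcpos.le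
    calc |pair m w| ≤ ∑ i, |m i * w i| := h1
      _ ≤ ∑ _i : Fin n, R * c := Finset.sum_le_sum h2
      _ = n * (R * c) := by rw [Finset.sum_const, Finset.card_univ, Fintype.card_fin,
          nsmul_eq_mul]
      _ = 1 := by rw [hcdef, ← mul_assoc, mul_one_div_cancel hnR.ne']
  have hwpolar : w ∈ polar Δ := fun m hm =>
    neg_le_of_neg_le (le_trans (neg_le_abs _) (by simpa using (abs_neg (pair m w) ▸
      (abs_neg (pair m w)).symm ▸ hpairw m hm)))
  have hwnegpolar : -w ∈ polar Δ := by
    intro m hm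
    have : pair m (-w) = -(pair m w) := by
      have := pair_smul_right m (-1) w
      simpa using this
    rw [this]
    have := hpairw m hm
    have h2 : pair m w ≤ 1 := le_trans (le_abs_self _) this
    linarith
  -- the union is contained in σs
  have hUsub : (⋃ i, {v ∈ σs | supp (D i) v = 1}) ⊆ σs :=
    Set.iUnion_subset fun i v hv => hv.1
  refine Set.Subset.antisymm ?_ (convexHull_min hUsub hσconv)
  -- extreme points of σs lie in the union
  have hextsub : Set.extremePoints ℝ σs ⊆ Set.extremePoints ℝ (polar Δ) :=
    (hface.isExtreme).extremePoints_subset_extremePoints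
  have hkey : Set.extremePoints ℝ σs ⊆ ⋃ i, {v ∈ σs | supp (D i) v = 1} := by
    intro e he
    have heσ : e ∈ σs := he.1
    have heE : e ∈ Set.extremePoints ℝ (polar Δ) := hextsub he
    by_contra hne
    have hall : ∀ i, supp (D i) e = 0 := by
      intro i
      rcases hnef i e (by rw [← hE] at heE; exact heE) with h | h
      · exact h
      · refine absurd ?_ hne
        exact Set.mem_iUnion_of_mem i (show e ∈ {v ∈ σs | supp (D i) v = 1} from ⟨heσ, h⟩)
    -- every m ∈ Δ pairs nonnegatively with e
    have hpos : ∀ m ∈ Δ, 0 ≤ pair m e := by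
      intro m hm
      rw [hΔ, Set.mem_fintype_sum] at hm
      obtain ⟨g, hg, rfl⟩ := hm
      rw [pair_sum']
      apply Finset.sum_nonneg
      intro i _
      have h1 : -(pair (g i) e) ≤ supp (D i) e := le_supp' (hDcomp i) (hg i) e
      rw [hall i] at h1
      linarith
    rcases eq_or_ne e 0 with rfl | hene
    · -- 0 is an extreme point, contradiction with ±w ∈ polar Δ
      have hseg : (0 : V n) ∈ openSegment ℝ w (-w) := by
        refine ⟨1/2, 1/2, by norm_num, by norm_num, by norm_num, ?_⟩
        rw [smul_neg, add_neg_cancel]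
      exact hwne (heE.2 hwpolar hwnegpolar hseg)
    · -- e ≠ 0, but 2e ∈ polar Δ and 0 ∈ polar Δ, contradiction
      have h2e : (2 : ℝ) • e ∈ polar Δ := by
        intro m hm
        rw [pair_smul_right]
        have := hpos m hm
        linarith
      have hseg : e ∈ openSegment ℝ (0 : V n) ((2 : ℝ) • e) := by
        refine ⟨1/2, 1/2, by norm_num, by norm_num, by norm_num, ?_⟩
        rw [smul_zero, zero_add, smul_smul]
        norm_num
      exact hene ((heE.2 h0polar h2e hseg)).symm
  -- Krein–Milman and finiteness of E
  have hfin : (Set.extremePoints ℝ σs).Finite :=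
    (E.finite_toSet).subset (by rw [hE]; exact hextsub)
  have hclosed : IsClosed (convexHull ℝ (Set.extremePoints ℝ σs)) :=
    (hfin.isCompact_convexHull ℝ).isClosed
  calc σs = closure (convexHull ℝ (Set.extremePoints ℝ σs)) :=
        (closure_convexHull_extremePoints hσcomp hσconv).symm
    _ = convexHull ℝ (Set.extremePoints ℝ σs) := hclosed.closure_eq
    _ ⊆ convexHull ℝ (⋃ i, {v ∈ σs | supp (D i) v = 1}) := convexHull_mono hkey
end BB
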